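/- Let λ > 0, let t ≥ 0, and let n, k ≥ 0 be integers. Then for all x > 0, (−1)^n x^{−(n+λ−1)} · (d/dx)^k [ x^{n+k+λ−1} · (d/dx)^n ( (x+t)^{−λ} ) ] = (Γ(n+k+λ)/Γ(λ)) · t^k/(x+t)^{n+k+λ}; that is, applying (d/dx)^n to y ↦ (y+t)^{−λ}, multiplying by y^{n+k+λ−1}, applying (d/dx)^k, evaluating at x, and multiplying by (−1)^n x^{−(n+λ−1)} yields (Γ(n+k+λ)/Γ(λ)) t^k (x+t)^{−(n+k+λ)}. -/

import Mathlib

open MeasureTheory Set Filter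

open Finset in
/-- The summand in the Leibniz-type expansion of `(d/dx)^k (x^a (x+t)^b)`. -/
noncomputable def Tt (t a b x : ℝ) (p : ℕ × ℕ) : ℝ :=
  ((p.1 + p.2).choose p.1 : ℝ) * (∏ l ∈ range p.1, (a - l)) * (∏ l ∈ range p.2, (b - l))
    * (x ^ (a - p.1) * (x + t) ^ (b - p.2))

open Finset in
/-- derivative of `y ↦ y^p (y+t)^q` for positive base. -/
lemma hd_term (p q t x : ℝ) (hx : 0 < x) (hxt : 0 < x + t) :
    HasDerivAt (fun y : ℝ => y ^ p * (y + t) ^ q)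
      (p * x ^ (p - 1) * (x + t) ^ q + x ^ p * (q * (x + t) ^ (q - 1))) x := by
  have h1 : HasDerivAt (fun y : ℝ => y ^ p) (p * x ^ (p - 1)) x :=
    Real.hasDerivAt_rpow_const (Or.inl hx.ne')
  have h2 : HasDerivAt (fun y : ℝ => (y + t) ^ q) (q * (x + t) ^ (q - 1)) x := by
    have := (Real.hasDerivAt_rpow_const (p := q) (x := x + t)
      (Or.inl hxt.ne')).comp x ((hasDerivAt_id x).add_const t)
    simpa [Function.comp_def] using this
  exact h1.mul h2

open Finset in
lemma hd_shift (q t x : ℝ) (hxt : 0 < x + t) :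
    HasDerivAt (fun y : ℝ => (y + t) ^ q) (q * (x + t) ^ (q - 1)) x := by
  have := (Real.hasDerivAt_rpow_const (p := q) (x := x + t)
    (Or.inl hxt.ne')).comp x ((hasDerivAt_id x).add_const t)
  simpa [Function.comp_def] using this

open Finset in
lemma gamma_prod (lam : ℝ) (hlam : 0 < lam) (m : ℕ) :
    Real.Gamma (lam + m) = (∏ i ∈ range m, (lam + i)) * Real.Gamma lam := by
  induction m with
  | zero => simp
  | succ m ih =>
    have h : lam + (m : ℝ) ≠ 0 := by positivity
    have e : lam + ((m : ℕ) + 1 : ℝ) = (lam + m) + 1 := by ring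
    push_cast
    rw [e, Real.Gamma_add_one h, ih, prod_range_succ]
    ring

open Finset in
lemma inner_deriv (b t : ℝ) (n : ℕ) :
    ∀ x : ℝ, 0 < x + t → iteratedDeriv n (fun z : ℝ => (z + t) ^ b) x
      = (∏ i ∈ range n, (b - i)) * (x + t) ^ (b - n) := by
  induction n with
  | zero => intro x hx; simp
  | succ n ih =>
    intro x hx
    rw [iteratedDeriv_succ]
    have hev : iteratedDeriv n (fun z : ℝ => (z + t) ^ b) =ᶠ[nhds x]
        fun y => (∏ i ∈ range n, (b - i)) * (y + t) ^ (b - n) := by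
      have h1 : ∀ᶠ y in nhds x, -t < y := eventually_gt_nhds (by linarith)
      exact h1.mono fun y hy => ih y (by linarith)
    rw [hev.deriv_eq, ((hd_shift (b - n) t x hx).const_mul _).deriv, prod_range_succ]
    have e : b - ((n + 1 : ℕ) : ℝ) = b - n - 1 := by push_cast; ring
    rw [e]; ring

open Finset in
lemma key (t a b x : ℝ) (k : ℕ) :
    ∑ p ∈ antidiagonal (k + 1), Tt t a b x p
      = ∑ p ∈ antidiagonal k,
          ((p.1 + p.2).choose p.1 : ℝ) * (∏ l ∈ range p.1, (a - l)) * (∏ l ∈ range p.2, (b - l))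
            * ((a - p.1) * x ^ (a - p.1 - 1) * (x + t) ^ (b - p.2)
               + x ^ (a - p.1) * ((b - p.2) * (x + t) ^ (b - p.2 - 1))) := by
  set W : ℕ × ℕ → ℝ := fun p =>
    if p.1 = 0 then 0 else
      ((p.1 - 1 + p.2).choose (p.1 - 1) : ℝ) * (∏ l ∈ range p.1, (a - l)) *
        (∏ l ∈ range p.2, (b - l)) * (x ^ (a - p.1) * (x + t) ^ (b - p.2)) with hW
  set W' : ℕ × ℕ → ℝ := fun p =>
    if p.2 = 0 then 0 else
      ((p.1 + (p.2 - 1)).choose p.1 : ℝ) * (∏ l ∈ range p.1, (a - l)) *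
        (∏ l ∈ range p.2, (b - l)) * (x ^ (a - p.1) * (x + t) ^ (b - p.2)) with hW'
  have step1 : ∑ p ∈ antidiagonal (k + 1), Tt t a b x p
      = ∑ p ∈ antidiagonal (k + 1), (W p + W' p) := by
    refine Finset.sum_congr rfl fun p hp => ?_
    obtain ⟨i, j⟩ := p
    match i, j with
    | 0, 0 => simp at hp
    | 0, j + 1 => simp [Tt, hW, hW']
    | i + 1, 0 => simp [Tt, hW, hW']
    | i + 1, j + 1 =>
      simp only [Tt, hW, hW', if_neg (Nat.succ_ne_zero i), if_neg (Nat.succ_ne_zero j),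
        Nat.add_sub_cancel]
      have hP : (((i + 1) + (j + 1)).choose (i + 1) : ℝ)
          = ((i + (j + 1)).choose i : ℝ) + (((i + 1) + j).choose (i + 1) : ℝ) := by
        push_cast [show (i + 1) + (j + 1) = (i + (j + 1)) + 1 by ring, Nat.choose_succ_succ,
          show i + (j + 1) = (i + 1) + j by ring]
        ring
      rw [hP]; ring
  have step2 : ∑ p ∈ antidiagonal (k + 1), W p
      = ∑ p ∈ antidiagonal k,
          ((p.1 + p.2).choose p.1 : ℝ) * (∏ l ∈ range p.1, (a - l)) * (∏ l ∈ range p.2, (b - l))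
            * ((a - p.1) * x ^ (a - p.1 - 1) * (x + t) ^ (b - p.2)) := by
    rw [Nat.sum_antidiagonal_succ]
    simp only [hW, if_pos rfl, zero_add]
    refine Finset.sum_congr rfl fun p hp => ?_
    obtain ⟨i, j⟩ := p
    simp only [if_neg (Nat.succ_ne_zero i), Nat.add_sub_cancel]
    rw [prod_range_succ]
    have e : a - ((i + 1 : ℕ) : ℝ) = a - i - 1 := by push_cast; ring
    rw [e]; ring
  have step3 : ∑ p ∈ antidiagonal (k + 1), W' p
      = ∑ p ∈ antidiagonal k,
          ((p.1 + p.2).choose p.1 : ℝ) * (∏ l ∈ range p.1, (a - l)) * (∏ l ∈ range p.2, (b - l))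
            * (x ^ (a - p.1) * ((b - p.2) * (x + t) ^ (b - p.2 - 1))) := by
    rw [Nat.sum_antidiagonal_succ']
    simp only [hW', if_pos rfl, zero_add]
    refine Finset.sum_congr rfl fun p hp => ?_
    obtain ⟨i, j⟩ := p
    simp only [if_neg (Nat.succ_ne_zero j), Nat.add_sub_cancel]
    rw [prod_range_succ]
    have e : b - ((j + 1 : ℕ) : ℝ) = b - j - 1 := by push_cast; ring
    rw [e]; ring
  rw [step1, Finset.sum_add_distrib, step2, step3, ← Finset.sum_add_distrib]
  refine Finset.sum_congr rfl fun p hp => ?_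
  ring

open Finset in
lemma main_deriv (t : ℝ) (ht : 0 ≤ t) (c a b : ℝ) (k : ℕ) :
    ∀ x : ℝ, 0 < x →
      iteratedDeriv k (fun y => c * (y ^ a * (y + t) ^ b)) x
        = c * ∑ p ∈ antidiagonal (k : ℕ), Tt t a b x p := by
  induction k with
  | zero =>
    intro x hx
    simp [Tt]
  | succ k ih =>
    intro x hx
    rw [iteratedDeriv_succ]
    have hev : iteratedDeriv k (fun y => c * (y ^ a * (y + t) ^ b)) =ᶠ[nhds x]
        fun y => c * ∑ p ∈ antidiagonal k, Tt t a b y p :=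
      (eventually_gt_nhds hx).mono fun y hy => ih y hy
    rw [hev.deriv_eq]
    have hD : HasDerivAt (fun y => c * ∑ p ∈ antidiagonal k, Tt t a b y p)
        (c * ∑ p ∈ antidiagonal k,
          ((p.1 + p.2).choose p.1 : ℝ) * (∏ l ∈ range p.1, (a - l)) * (∏ l ∈ range p.2, (b - l))
            * ((a - p.1) * x ^ (a - p.1 - 1) * (x + t) ^ (b - p.2)
               + x ^ (a - p.1) * ((b - p.2) * (x + t) ^ (b - p.2 - 1)))) x := by
      refine HasDerivAt.const_mul c (HasDerivAt.fun_sum fun p hp => ?_)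
      have := (hd_term (a - p.1) (b - p.2) t x hx (by linarith)).const_mul
        (((p.1 + p.2).choose p.1 : ℝ) * (∏ l ∈ range p.1, (a - l)) * (∏ l ∈ range p.2, (b - l)))
      simpa [Tt, mul_assoc] using this
    rw [hD.deriv, ← key]

open Finset in
lemma final_sum (μ t x : ℝ) (hx : 0 < x) (hxt : 0 < x + t) (k : ℕ) :
    ∑ p ∈ antidiagonal k, Tt t (μ + k - 1) (-μ) x p
      = (∏ l ∈ range k, (μ + l)) * x ^ (μ - 1) * (x + t) ^ (-(μ + k)) * t ^ k := by
  have hstep : ∀ p ∈ antidiagonal k, Tt t (μ + k - 1) (-μ) x p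
      = (∏ l ∈ range k, (μ + l)) * x ^ (μ - 1) * (x + t) ^ (-(μ + k)) *
          ((k.choose p.1 : ℝ) * ((x + t) ^ p.1 * (-x) ^ p.2)) := by
    intro p hp
    obtain ⟨i, j⟩ := p
    have hij : i + j = k := Finset.HasAntidiagonal.mem_antidiagonal.mp hp
    have hijR : ((i : ℝ)) + j = k := by exact_mod_cast congrArg (Nat.cast : ℕ → ℝ) hij
    simp only [Tt]
    have e1 : (μ + (k : ℝ) - 1) - (i : ℝ) = (μ - 1) + ((j : ℕ) : ℝ) := by linarith
    have e2 : (-μ) - (j : ℝ) = (-(μ + (k : ℝ))) + ((i : ℕ) : ℝ) := by linarith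
    rw [e1, Real.rpow_add hx, Real.rpow_natCast, e2, Real.rpow_add hxt, Real.rpow_natCast]
    have hFb : (∏ l ∈ range j, ((-μ) - (l : ℝ))) = (-1) ^ j * ∏ l ∈ range j, (μ + l) :=
      calc (∏ l ∈ range j, ((-μ) - (l : ℝ)))
          = ∏ l ∈ range j, ((-1) * (μ + l)) := prod_congr rfl fun l _ => by ring
        _ = (∏ _l ∈ range j, (-1 : ℝ)) * ∏ l ∈ range j, (μ + l) := prod_mul_distrib
        _ = (-1) ^ j * ∏ l ∈ range j, (μ + l) := by rw [prod_const, card_range]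
    have hFa : (∏ l ∈ range i, ((μ + (k : ℝ) - 1) - (l : ℝ)))
        = ∏ m ∈ range i, (μ + ((j + m : ℕ) : ℝ)) := by
      have hrefl := Finset.prod_range_reflect (fun m => μ + ((j + m : ℕ) : ℝ)) i
      rw [← hrefl]
      refine prod_congr rfl fun l hl => ?_
      have hl' : l < i := mem_range.mp hl
      have h1 : j + (i - 1 - l) + 1 + l = k := by omega
      have h2 : ((j + (i - 1 - l) : ℕ) : ℝ) + 1 + l = k := by
        exact_mod_cast congrArg (Nat.cast : ℕ → ℝ) h1
      show (μ + (k : ℝ) - 1) - (l : ℝ) = μ + ((j + (i - 1 - l) : ℕ) : ℝ)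
      linarith
    have hsplit : (∏ l ∈ range k, (μ + (l : ℝ)))
        = (∏ l ∈ range j, (μ + (l : ℝ))) * ∏ m ∈ range i, (μ + ((j + m : ℕ) : ℝ)) := by
      rw [show k = j + i from by omega]
      exact prod_range_add (fun l => μ + ((l : ℕ) : ℝ)) j i
    rw [hij, hFa, hFb, hsplit, neg_pow]
    push_cast
    ring
  rw [Finset.sum_congr rfl hstep, ← mul_sum]
  have h := (Commute.all (x + t) (-x)).add_pow' k
  simp only [nsmul_eq_mul] at h
  rw [← h, show x + t + -x = t from by ring]

/-- for `λ > 0`, `t ≥ 0`, and `n, k ≥ 0`,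
`(−1)^n x^{−(n+λ−1)} (d/dx)^k [ x^{n+k+λ−1} (d/dx)^n ((x+t)^{−λ}) ]
  = (Γ(n+k+λ)/Γ(λ)) t^k/(x+t)^{n+k+λ}` for all `x > 0`. -/
theorem stmt15 (lam : ℝ) (hlam : 0 < lam) (t : ℝ) (ht : 0 ≤ t) (n k : ℕ) :
    ∀ x > (0 : ℝ),
      (-1 : ℝ) ^ n * x ^ (-((n : ℝ) + lam - 1)) *
          iteratedDeriv k
            (fun y => y ^ ((n : ℝ) + k + lam - 1) *
              iteratedDeriv n (fun z => (z + t) ^ (-lam)) y) x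
        = Real.Gamma ((n : ℝ) + k + lam) / Real.Gamma lam *
            (t ^ k / (x + t) ^ ((n : ℝ) + k + lam)) := by
  intro x hx
  have hxt : 0 < x + t := by linarith
  classical
  set c : ℝ := ∏ i ∈ Finset.range n, ((-lam) - i) with hc
  have houter : (fun y => y ^ ((n : ℝ) + k + lam - 1) *
        iteratedDeriv n (fun z => (z + t) ^ (-lam)) y)
      =ᶠ[nhds x] fun y => c * (y ^ ((n : ℝ) + k + lam - 1) * (y + t) ^ ((-lam) - n)) := by
    refine (eventually_gt_nhds hx).mono fun y hy => ?_
    show y ^ ((n : ℝ) + k + lam - 1) * iteratedDeriv n (fun z => (z + t) ^ (-lam)) y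
      = c * (y ^ ((n : ℝ) + k + lam - 1) * (y + t) ^ ((-lam) - n))
    rw [inner_deriv (-lam) t n y (by linarith)]
    ring
  rw [houter.iteratedDeriv_eq k, main_deriv t ht c ((n : ℝ) + k + lam - 1) ((-lam) - n) k x hx]
  have ea : (n : ℝ) + k + lam - 1 = (lam + n) + k - 1 := by ring
  have eb : (-lam) - (n : ℝ) = -(lam + (n : ℝ)) := by ring
  rw [ea, eb, final_sum (lam + n) t x hx hxt k]
  -- now pure algebra
  have hc' : c = (-1 : ℝ) ^ n * ∏ i ∈ Finset.range n, (lam + i) := by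
    rw [hc]
    calc (∏ i ∈ Finset.range n, ((-lam) - (i : ℝ)))
        = ∏ i ∈ Finset.range n, ((-1) * (lam + i)) := Finset.prod_congr rfl fun i _ => by ring
      _ = (∏ _i ∈ Finset.range n, (-1 : ℝ)) * ∏ i ∈ Finset.range n, (lam + i) :=
          Finset.prod_mul_distrib
      _ = (-1) ^ n * ∏ i ∈ Finset.range n, (lam + i) := by
          rw [Finset.prod_const, Finset.card_range]
  have hG : Real.Gamma ((n : ℝ) + k + lam)
      = (∏ i ∈ Finset.range (n + k), (lam + i)) * Real.Gamma lam := by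
    rw [show (n : ℝ) + k + lam = lam + ((n + k : ℕ) : ℝ) from by push_cast; ring]
    exact gamma_prod lam hlam (n + k)
  have hGne : Real.Gamma lam ≠ 0 := (Real.Gamma_pos_of_pos hlam).ne'
  have hprodsplit : (∏ i ∈ Finset.range (n + k), (lam + (i : ℝ)))
      = (∏ i ∈ Finset.range n, (lam + (i : ℝ))) *
          ∏ l ∈ Finset.range k, ((lam + (n : ℝ)) + l) := by
    rw [Finset.prod_range_add]
    congr 1
    refine Finset.prod_congr rfl fun l _ => ?_
    push_cast; ring
  have hxpow : x ^ (-((n : ℝ) + lam - 1)) * x ^ ((lam + (n : ℝ)) - 1) = 1 := by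
    rw [← Real.rpow_add hx, show -((n : ℝ) + lam - 1) + ((lam + (n : ℝ)) - 1) = 0 from by ring,
      Real.rpow_zero]
  have hxtpow : (x + t) ^ (-((lam + (n : ℝ)) + k)) = ((x + t) ^ ((n : ℝ) + k + lam))⁻¹ := by
    rw [show -((lam + (n : ℝ)) + k) = -((n : ℝ) + k + lam) from by ring,
      Real.rpow_neg hxt.le]
  rw [hc', hG, hprodsplit, hxtpow]
  have hdiv : (∏ i ∈ Finset.range n, (lam + (i : ℝ))) *
        (∏ l ∈ Finset.range k, ((lam + (n : ℝ)) + l)) * Real.Gamma lam / Real.Gamma lam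
      = (∏ i ∈ Finset.range n, (lam + (i : ℝ))) *
          ∏ l ∈ Finset.range k, ((lam + (n : ℝ)) + l) :=
    mul_div_cancel_right₀ _ hGne
  rw [hdiv, div_eq_mul_inv]
  have h1 : (-1 : ℝ) ^ n * (-1 : ℝ) ^ n = 1 := by rw [← mul_pow]; norm_num
  calc (-1 : ℝ) ^ n * x ^ (-((n : ℝ) + lam - 1)) *
        (((-1 : ℝ) ^ n * ∏ i ∈ Finset.range n, (lam + i)) *
          ((∏ l ∈ Finset.range k, ((lam + (n : ℝ)) + l)) * x ^ ((lam + (n : ℝ)) - 1) *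
            ((x + t) ^ ((n : ℝ) + k + lam))⁻¹ * t ^ k))
      = ((-1 : ℝ) ^ n * (-1 : ℝ) ^ n) *
          (x ^ (-((n : ℝ) + lam - 1)) * x ^ ((lam + (n : ℝ)) - 1)) *
          ((∏ i ∈ Finset.range n, (lam + (i : ℝ))) *
            (∏ l ∈ Finset.range k, ((lam + (n : ℝ)) + l)) *
            (t ^ k * ((x + t) ^ ((n : ℝ) + k + lam))⁻¹)) := by ring
    _ = (∏ i ∈ Finset.range n, (lam + (i : ℝ))) *
          (∏ l ∈ Finset.range k, ((lam + (n : ℝ)) + l)) *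
          (t ^ k * ((x + t) ^ ((n : ℝ) + k + lam))⁻¹) := by
        rw [h1, hxpow]; ring
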